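/- Suppose ρ, K, S : ℝ → ℝ are differentiable and L, d : ℝ → ℝ are continuous, with: ρ'(τ) = 0 for all τ; ρ(τ)/K(τ) > 0 for all τ; (ρ/K)'(τ) = −(ρ(τ)/K(τ))·d(τ) for all τ; and S'(τ) = L(τ) for all τ. Set Y = −S/ħ and define φ(τ) = (ρ(τ)/K(τ))^{1/2}·e^{−i·Y(τ)}. Then for all τ, i·ħ·φ'(τ) = −L(τ)·φ(τ) − (i·ħ/2)·d(τ)·φ(τ). -/
import Mathlib


/-- The probability-amplitude wavefunction `φ = (ρ/K)^{1/2} e^{-iY}`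
with `Y = -S/hbar` satisfies `i hbar φ' = -L φ - (i hbar/2) d φ`. -/
theorem rqte_probability_amplitude_evolution
    (hbar : ℝ) (hb : 0 < hbar)
    (ρ K S L d : ℝ → ℝ)
    (hρ : Differentiable ℝ ρ) (hK : Differentiable ℝ K) (hS : Differentiable ℝ S)
    (hL : Continuous L) (hd : Continuous d)
    (hρ' : ∀ τ, deriv ρ τ = 0)
    (hpos : ∀ τ, 0 < ρ τ / K τ)
    (hinv : ∀ τ, deriv (fun σ => ρ σ / K σ) τ = -(ρ τ / K τ) * d τ)
    (hS' : ∀ τ, deriv S τ = L τ)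
    (Y : ℝ → ℝ) (hY : Y = fun τ => -S τ / hbar)
    (φ : ℝ → ℂ)
    (hφ : φ = fun τ => (((ρ τ / K τ) ^ ((1 : ℝ) / 2) : ℝ) : ℂ) * Complex.exp (-Complex.I * (Y τ : ℂ))) :
    ∀ τ, Complex.I * (hbar : ℂ) * deriv φ τ
      = -(L τ : ℂ) * φ τ - Complex.I * (hbar : ℂ) / 2 * (d τ : ℂ) * φ τ := by
  subst hY hφ
  intro τ
  have hK0 : ∀ σ, K σ ≠ 0 := by
    intro σ h
    have := hpos σ
    rw [h, div_zero] at this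
    exact lt_irrefl 0 this
  have hrdiff : Differentiable ℝ (fun σ => ρ σ / K σ) := hρ.div hK hK0
  have hrd : HasDerivAt (fun σ => ρ σ / K σ) (-(ρ τ / K τ) * d τ) τ := by
    have := (hrdiff τ).hasDerivAt
    rwa [hinv τ] at this
  have hrpos := hpos τ
  have hfd : HasDerivAt (fun σ => (ρ σ / K σ) ^ ((1:ℝ)/2))
      ((-(ρ τ / K τ) * d τ) * ((1:ℝ)/2) * (ρ τ / K τ) ^ ((1:ℝ)/2 - 1)) τ :=
    hrd.rpow_const (Or.inl (ne_of_gt hrpos))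
  have hYd : HasDerivAt (fun σ => -S σ / hbar) (-L τ / hbar) τ := by
    have h1 : HasDerivAt S (L τ) τ := by
      have := (hS τ).hasDerivAt; rwa [hS' τ] at this
    simpa [neg_div] using h1.neg.div_const hbar
  have hgd : HasDerivAt (fun σ => Complex.exp (-Complex.I * ((-S σ / hbar : ℝ) : ℂ)))
      (Complex.exp (-Complex.I * ((-S τ / hbar : ℝ) : ℂ)) * (-Complex.I * ((-L τ / hbar : ℝ) : ℂ))) τ :=
    (hYd.ofReal_comp.const_mul (-Complex.I)).cexp
  have hφd : HasDerivAt (fun σ => (((ρ σ / K σ) ^ ((1:ℝ)/2) : ℝ) : ℂ) *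
        Complex.exp (-Complex.I * ((-S σ / hbar : ℝ) : ℂ)))
      ((((-(ρ τ / K τ) * d τ) * ((1:ℝ)/2) * (ρ τ / K τ) ^ ((1:ℝ)/2 - 1) : ℝ) : ℂ) *
        Complex.exp (-Complex.I * ((-S τ / hbar : ℝ) : ℂ)) +
       (((ρ τ / K τ) ^ ((1:ℝ)/2) : ℝ) : ℂ) *
        (Complex.exp (-Complex.I * ((-S τ / hbar : ℝ) : ℂ)) * (-Complex.I * ((-L τ / hbar : ℝ) : ℂ)))) τ :=
    hfd.ofReal_comp.mul hgd
  rw [hφd.deriv]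
  have hkey : (ρ τ / K τ) * (ρ τ / K τ) ^ ((1:ℝ)/2 - 1) = (ρ τ / K τ) ^ ((1:ℝ)/2) := by
    have h := (Real.rpow_add hrpos 1 ((1:ℝ)/2 - 1)).symm
    rw [Real.rpow_one] at h
    rw [h]
    norm_num
  have hcoef : (-(ρ τ / K τ) * d τ * ((1:ℝ)/2) * (ρ τ / K τ) ^ ((1:ℝ)/2 - 1) : ℝ)
      = -(1/2) * d τ * (ρ τ / K τ) ^ ((1:ℝ)/2) := by
    rw [← hkey]; ring
  rw [hcoef]
  have hb0 : (hbar : ℂ) ≠ 0 := Complex.ofReal_ne_zero.mpr (ne_of_gt hb)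
  push_cast
  field_simp
  ring_nf
  rw [Complex.I_sq]
  ring
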